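/- Removing a non-maximal clique and reconnecting its neighbors to a containing clique preserves validity: if in a valid clique tree a clique C_i satisfies C_i ⊆ C_j for an adjacent clique C_j, then deleting C_i and connecting all other neighbors of C_i directly to C_j yields a tree that still satisfies the running intersection property with the same sepsets among remaining cliques. -/

import Mathlib

/-- Running intersection property. -/
def RIP {ι V : Type*} (G : SimpleGraph ι) (C : ι → Finset V) : Prop :=
  ∀ (v : V) (a b : ι) (ha : v ∈ C a) (hb : v ∈ C b),
    (G.induce {t | v ∈ C t}).Reachable ⟨a, ha⟩ ⟨b, hb⟩

private lemma reachMap {α β : Type*} {A : SimpleGraph α} {B : SimpleGraph β} (f : α → β)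
    (h : ∀ u w, A.Adj u w → B.Reachable (f u) (f w)) :
    ∀ {u w : α}, A.Reachable u w → B.Reachable (f u) (f w) := by
  intro u w hr
  obtain ⟨p⟩ := hr
  induction p with
  | nil => exact SimpleGraph.Reachable.refl _
  | cons h' _ ih => exact (h _ _ h').trans ih

/-- removing a non-maximal clique and reconnecting its neighbors to a
containing clique preserves validity: if in a valid clique tree the clique `C i` is
contained in the adjacent clique `C j`, then deleting node `i` and connecting all other
neighbors of `i` directly to `j` yields a tree that still satisfies the running
intersection property (the sepsets among the remaining cliques, being intersections of
the unchanged labels, are preserved). -/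

theorem remove_nonmaximal_clique_preserves_validity
    {ι V : Type*} (G : SimpleGraph ι) (hT : G.IsTree)
    (C : ι → Finset V) (hRIP : RIP G C)
    (i j : ι) (hadj : G.Adj i j) (hsub : C i ⊆ C j) :
    (SimpleGraph.fromRel (fun a b : {t : ι // t ≠ i} =>
        G.Adj a.1 b.1 ∨ (a.1 = j ∧ G.Adj b.1 i) ∨ (b.1 = j ∧ G.Adj a.1 i))).IsTree ∧
    RIP (SimpleGraph.fromRel (fun a b : {t : ι // t ≠ i} =>
        G.Adj a.1 b.1 ∨ (a.1 = j ∧ G.Adj b.1 i) ∨ (b.1 = j ∧ G.Adj a.1 i)))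
      (fun t => C t.1) := by
  classical
  set G' := SimpleGraph.fromRel (fun a b : {t : ι // t ≠ i} =>
      G.Adj a.1 b.1 ∨ (a.1 = j ∧ G.Adj b.1 i) ∨ (b.1 = j ∧ G.Adj a.1 i)) with hG'
  have hji : j ≠ i := hadj.ne'
  have hG'adj : ∀ a b : {t : ι // t ≠ i}, G'.Adj a b ↔ a ≠ b ∧
      (G.Adj a.1 b.1 ∨ (a.1 = j ∧ G.Adj b.1 i) ∨ (b.1 = j ∧ G.Adj a.1 i)) := by
    intro a b
    rw [hG', SimpleGraph.fromRel_adj]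
    constructor
    · rintro ⟨hne, h | h⟩
      · exact ⟨hne, h⟩
      · refine ⟨hne, ?_⟩
        rcases h with h | ⟨h1, h2⟩ | ⟨h1, h2⟩
        · exact Or.inl h.symm
        · exact Or.inr (Or.inr ⟨h1, h2⟩)
        · exact Or.inr (Or.inl ⟨h1, h2⟩)
    · rintro ⟨hne, h⟩
      exact ⟨hne, Or.inl h⟩
  set ψ : ι → {t : ι // t ≠ i} := fun t => if h : t = i then ⟨j, hji⟩ else ⟨t, h⟩ with hψ
  have hψval : ∀ (t : ι) (h : t ≠ i), ψ t = ⟨t, h⟩ := by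
    intro t h; simp only [hψ]; exact dif_neg h
  have hψi : ψ i = ⟨j, hji⟩ := by simp [hψ]
  have hstep : ∀ u w : ι, G.Adj u w → ψ u = ψ w ∨ G'.Adj (ψ u) (ψ w) := by
    intro u w huw
    by_cases hu : u = i
    · have hw : w ≠ i := fun h => huw.ne (hu.trans h.symm)
      rw [hu, hψi, hψval w hw]
      by_cases hwj : w = j
      · exact Or.inl (Subtype.ext hwj.symm)
      · exact Or.inr ((hG'adj _ _).2 ⟨fun h => hwj (congrArg Subtype.val h).symm,
          Or.inr (Or.inl ⟨rfl, (hu ▸ huw).symm⟩)⟩)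
    · by_cases hw : w = i
      · rw [hw, hψi, hψval u hu]
        by_cases huj : u = j
        · exact Or.inl (Subtype.ext huj)
        · exact Or.inr ((hG'adj _ _).2 ⟨fun h => huj (congrArg Subtype.val h),
            Or.inr (Or.inr ⟨rfl, hw ▸ huw⟩)⟩)
      · rw [hψval u hu, hψval w hw]
        exact Or.inr ((hG'adj _ _).2 ⟨fun h => huw.ne (congrArg Subtype.val h), Or.inl huw⟩)
  -- connectivity
  have hconn : G'.Connected := by
    have hpre : G'.Preconnected := by
      intro a b
      have hr := reachMap ψ (fun u w h => by
        rcases hstep u w h with h' | h'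
        · rw [h']
        · exact h'.reachable) (hT.1.preconnected a.1 b.1)
      rwa [hψval a.1 a.2, hψval b.1 b.2] at hr
    haveI : Nonempty {t : ι // t ≠ i} := ⟨⟨j, hji⟩⟩
    exact ⟨hpre⟩
  -- each edge of G is a bridge
  have hGbridge : ∀ u w : ι, G.Adj u w →
      ¬(G \ SimpleGraph.fromEdgeSet {s(u, w)}).Reachable u w := by
    intro u w h
    exact (SimpleGraph.isBridge_iff.1
      ((SimpleGraph.isAcyclic_iff_forall_adj_isBridge.1 hT.2) h))
  have hval : ∀ u w x y : {t : ι // t ≠ i}, s(u.1, w.1) = s(x.1, y.1) → s(u, w) = s(x, y) := by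
    intro u w x y h
    rcases Sym2.eq_iff.1 h with ⟨h1, h2⟩ | ⟨h1, h2⟩
    · rw [Subtype.ext h1, Subtype.ext h2]
    · rw [Subtype.ext h1, Subtype.ext h2, Sym2.eq_swap]
  -- the generic lift of walks in G' minus an edge to walks in G minus an edge
  have hlift : ∀ (a b : {t : ι // t ≠ i}) (e : Sym2 ι),
      (∀ u w : {t : ι // t ≠ i}, G.Adj u.1 w.1 → s(u, w) ≠ s(a, b) → s(u.1, w.1) ≠ e) →
      (s(j, i) ≠ e) →
      (∀ w : {t : ι // t ≠ i}, G.Adj w.1 i →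
          s((⟨j, hji⟩ : {t : ι // t ≠ i}), w) ≠ s(a, b) → s(i, w.1) ≠ e) →
      ∀ u w : {t : ι // t ≠ i}, (G' \ SimpleGraph.fromEdgeSet {s(a, b)}).Adj u w →
        (G \ SimpleGraph.fromEdgeSet {e}).Reachable u.1 w.1 := by
    intro a b e c1 c2 c3 u w huw
    rw [SimpleGraph.sdiff_adj] at huw
    obtain ⟨huw', hnd⟩ := huw
    rw [SimpleGraph.fromEdgeSet_adj] at hnd
    obtain ⟨hne, hcase⟩ := (hG'adj u w).1 huw'
    have hD : s(u, w) ≠ s(a, b) := fun hc => hnd ⟨hc, hne⟩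
    have hedge : ∀ x y : ι, G.Adj x y → s(x, y) ≠ e →
        (G \ SimpleGraph.fromEdgeSet {e}).Adj x y := by
      intro x y hxy hxe
      rw [SimpleGraph.sdiff_adj, SimpleGraph.fromEdgeSet_adj]
      exact ⟨hxy, fun hc => hxe hc.1⟩
    rcases hcase with h1 | ⟨h2a, h2b⟩ | ⟨h3a, h3b⟩
    · exact (hedge u.1 w.1 h1 (c1 u w h1 hD)).reachable
    · have hu : u = ⟨j, hji⟩ := Subtype.ext h2a
      have hD' : s((⟨j, hji⟩ : {t : ι // t ≠ i}), w) ≠ s(a, b) := hu ▸ hD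
      have r1 : (G \ SimpleGraph.fromEdgeSet {e}).Adj u.1 i := by
        rw [hu]
        exact hedge j i hadj.symm c2
      have r2 : (G \ SimpleGraph.fromEdgeSet {e}).Adj i w.1 :=
        hedge i w.1 h2b.symm (c3 w h2b hD')
      exact r1.reachable.trans r2.reachable
    · have hw : w = ⟨j, hji⟩ := Subtype.ext h3a
      have hD' : s((⟨j, hji⟩ : {t : ι // t ≠ i}), u) ≠ s(a, b) := by
        rw [← hw, Sym2.eq_swap]; exact hD
      have r1 : (G \ SimpleGraph.fromEdgeSet {e}).Adj u.1 i :=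
        hedge u.1 i h3b (by rw [Sym2.eq_swap]; exact c3 u h3b hD')
      have r2 : (G \ SimpleGraph.fromEdgeSet {e}).Adj i w.1 := by
        rw [hw]
        exact hedge i j hadj (by rw [Sym2.eq_swap]; exact c2)
      exact r1.reachable.trans r2.reachable
  -- case A : the removed G'-edge corresponds to a real G-edge between its endpoints
  have hcaseA : ∀ a b : {t : ι // t ≠ i}, G.Adj a.1 b.1 →
      ¬(G' \ SimpleGraph.fromEdgeSet {s(a, b)}).Reachable a b := by
    intro a b hab hre
    refine hGbridge a.1 b.1 hab ?_
    refine reachMap Subtype.val (hlift a b s(a.1, b.1) ?_ ?_ ?_) hre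
    · intro u w h1 hD hc
      exact hD (hval u w a b hc)
    · intro hc
      rcases Sym2.eq_iff.1 hc with ⟨h1, h2⟩ | ⟨h1, h2⟩
      · exact b.2 h2.symm
      · exact a.2 h2.symm
    · intro w hw hD hc
      rcases Sym2.eq_iff.1 hc with ⟨h1, h2⟩ | ⟨h1, h2⟩
      · exact a.2 h1.symm
      · exact b.2 h1.symm
  -- case B : the removed G'-edge is a reconnection edge j - b with b a former neighbor of i
  have hcaseB : ∀ a b : {t : ι // t ≠ i}, a ≠ b → a.1 = j → G.Adj b.1 i →
      ¬(G' \ SimpleGraph.fromEdgeSet {s(a, b)}).Reachable a b := by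
    intro a b hneab haj hbi hre
    by_cases hab : G.Adj a.1 b.1
    · exact hcaseA a b hab hre
    have hbj : b.1 ≠ j := by
      intro hc
      exact hneab (Subtype.ext (haj.trans hc.symm))
    refine hGbridge i b.1 hbi.symm ?_
    have hmain : (G \ SimpleGraph.fromEdgeSet {s(i, b.1)}).Reachable a.1 b.1 :=
      reachMap Subtype.val (hlift a b s(i, b.1) ?_ ?_ ?_) hre
    · have hij : (G \ SimpleGraph.fromEdgeSet {s(i, b.1)}).Adj i j := by
        rw [SimpleGraph.sdiff_adj, SimpleGraph.fromEdgeSet_adj]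
        refine ⟨hadj, fun hc => ?_⟩
        rcases Sym2.eq_iff.1 hc.1 with ⟨h1, h2⟩ | ⟨h1, h2⟩
        · exact hbj h2.symm
        · exact hji h2
      exact hij.reachable.trans (haj ▸ hmain)
    · intro u w h1 hD hc
      rcases Sym2.eq_iff.1 hc with ⟨h1', h2'⟩ | ⟨h1', h2'⟩
      · exact u.2 h1'
      · exact w.2 h2'
    · intro hc
      rcases Sym2.eq_iff.1 hc with ⟨h1', h2'⟩ | ⟨h1', h2'⟩
      · exact hji h1'
      · exact hbj h1'.symm
    · intro w hw hD hc
      rcases Sym2.eq_iff.1 hc with ⟨h1', h2'⟩ | ⟨h1', h2'⟩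
      · refine hD ?_
        rw [(Subtype.ext h2' : w = b), (Subtype.ext haj : a = ⟨j, hji⟩)]
      · exact w.2 h2'
  have hacyc : G'.IsAcyclic := by
    rw [SimpleGraph.isAcyclic_iff_forall_adj_isBridge]
    intro a b hab
    rw [SimpleGraph.isBridge_iff]
    obtain ⟨hne, hcase⟩ := (hG'adj a b).1 hab
    rcases hcase with h1 | ⟨h2a, h2b⟩ | ⟨h3a, h3b⟩
    · exact hcaseA a b h1
    · exact hcaseB a b hne h2a h2b
    · intro hre
      refine hcaseB b a hne.symm h3a h3b ?_
      rw [Sym2.eq_swap] at hre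
      exact hre.symm
  refine ⟨⟨hconn, hacyc⟩, ?_⟩
  -- RIP
  intro v a b ha hb
  have hbase := hRIP v a.1 b.1 ha hb
  have hmem : ∀ x : {t : ι | v ∈ C t}, v ∈ C (ψ x.1).1 := by
    intro x
    by_cases hx : x.1 = i
    · rw [hx, hψi]; exact hsub (hx ▸ x.2)
    · rw [hψval x.1 hx]; exact x.2
  let f : {t : ι | v ∈ C t} → {t : {t : ι // t ≠ i} | v ∈ C t.1} := fun x => ⟨ψ x.1, hmem x⟩
  have hstep2 : ∀ x y : {t : ι | v ∈ C t}, (G.induce {t | v ∈ C t}).Adj x y →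
      (G'.induce {t : {t : ι // t ≠ i} | v ∈ C t.1}).Reachable (f x) (f y) := by
    intro x y hxy
    have hxy' : G.Adj x.1 y.1 := SimpleGraph.comap_adj.mp hxy
    rcases hstep x.1 y.1 hxy' with h' | h'
    · have hfe : f x = f y := Subtype.ext h'
      rw [hfe]
    · exact (SimpleGraph.comap_adj.mpr h' :
        (G'.induce {t : {t : ι // t ≠ i} | v ∈ C t.1}).Adj (f x) (f y)).reachable
  have hr := reachMap f hstep2 hbase
  have E1 : f ⟨a.1, ha⟩ = ⟨a, ha⟩ := Subtype.ext (hψval a.1 a.2)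
  have E2 : f ⟨b.1, hb⟩ = ⟨b, hb⟩ := Subtype.ext (hψval b.1 b.2)
  rw [E1, E2] at hr
  exact hr
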